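/- Let F(z) = 1 − (2/Γ(Q)) (z/ζ)^{Q/2} K_Q(2√(z/ζ)) for ζ > 0 and integer Q ≥ 2. Then as ζ → ∞ (high SNR), F(z) ~ z/((Q−1)ζ); i.e., lim_{ζ→∞} ζ·F(z) = z/(Q−1) for each fixed z > 0. -/

import Mathlib

open Real Filter

section Aux

open MeasureTheory Set

private lemma integrable_gn (n : ℕ) :
    IntegrableOn (fun u : ℝ => Real.exp (-u) * u ^ n) (Ioi (0:ℝ)) := by
  have h := Real.GammaIntegral_convergent (s := (n:ℝ)+1) (by positivity)
  refine h.congr_fun ?_ measurableSet_Ioi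
  intro x hx
  simp [Real.rpow_natCast]

private lemma Gamma_nat_integral (n : ℕ) (hn : 1 ≤ n) :
    Real.Gamma n = ∫ u in Ioi (0:ℝ), Real.exp (-u) * u ^ (n-1) := by
  rw [Real.Gamma_eq_integral (by positivity : (0:ℝ) < n)]
  refine setIntegral_congr_fun measurableSet_Ioi (fun x hx => ?_)
  have h : ((n:ℝ) - 1) = ((n-1 : ℕ) : ℝ) := by
    push_cast [Nat.cast_sub hn]
    ring
  rw [h, Real.rpow_natCast]

private lemma integrable_kn (n : ℕ) {y : ℝ} (hy : 0 ≤ y) :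
    IntegrableOn (fun u : ℝ => Real.exp (-u - y/u) * u ^ n) (Ioi (0:ℝ)) := by
  refine (integrable_gn n).mono' ?_ ?_
  · refine ContinuousOn.aestronglyMeasurable ?_ measurableSet_Ioi
    refine ContinuousOn.mul ?_ (continuousOn_id.pow n)
    exact (continuousOn_id.neg.sub (continuousOn_const.div continuousOn_id
      (fun x hx => ne_of_gt hx))).rexp
  · filter_upwards [ae_restrict_mem measurableSet_Ioi] with u hu
    have hu0 : (0:ℝ) < u := hu
    have h : Real.exp (-u - y/u) ≤ Real.exp (-u) := by
      apply Real.exp_le_exp.mpr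
      have : 0 ≤ y / u := div_nonneg hy hu0.le
      linarith
    rw [Real.norm_eq_abs, abs_mul, abs_of_nonneg (Real.exp_pos _).le,
      abs_of_nonneg (pow_nonneg hu0.le _)]
    exact mul_le_mul_of_nonneg_right h (pow_nonneg hu0.le _)

private lemma slope_lim {u : ℝ} (hu : 0 < u) :
    Tendsto (fun y : ℝ => (1 - Real.exp (-y/u))/y) (nhdsWithin 0 (Ioi 0)) (nhds u⁻¹) := by
  have hd : HasDerivAt (fun y : ℝ => 1 - Real.exp (-y/u)) u⁻¹ 0 := by
    have h1 : HasDerivAt (fun y : ℝ => -y/u) (-u⁻¹) 0 := by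
      simpa [neg_div] using ((hasDerivAt_id (0:ℝ)).div_const u).fun_neg
    have h2 := h1.exp
    simp only [neg_zero, zero_div, Real.exp_zero, one_mul] at h2
    have h3 := h2.const_sub 1
    simpa using h3
  have h := hasDerivAt_iff_tendsto_slope.mp hd
  have hmono : Tendsto (slope (fun y : ℝ => 1 - Real.exp (-y/u)) 0)
      (nhdsWithin 0 (Ioi 0)) (nhds u⁻¹) :=
    h.mono_left (nhdsWithin_mono _ (fun x hx => ne_of_gt hx))
  refine hmono.congr (fun y => ?_)
  rw [slope_def_field]
  simp [div_eq_mul_inv]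

private lemma img_exp {c : ℝ} (hc : 0 < c) :
    (fun t : ℝ => c * Real.exp t) '' Ioi 0 = Ioi c := by
  ext x
  simp only [mem_image, mem_Ioi]
  constructor
  · rintro ⟨t, ht, rfl⟩
    have h1 : (1:ℝ) < Real.exp t := Real.one_lt_exp_iff.mpr ht
    nlinarith
  · intro hx
    refine ⟨Real.log (x / c), ?_, ?_⟩
    · exact Real.log_pos ((one_lt_div hc).mpr hx)
    · rw [Real.exp_log (div_pos (hc.trans hx) hc)]
      field_simp

private lemma img_exp_neg {c : ℝ} (hc : 0 < c) :
    (fun t : ℝ => c * Real.exp (-t)) '' Ioi 0 = Ioo 0 c := by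
  ext x
  simp only [mem_image, mem_Ioi, mem_Ioo]
  constructor
  · rintro ⟨t, ht, rfl⟩
    have h1 : Real.exp (-t) < 1 := Real.exp_lt_one_iff.mpr (by linarith)
    have h2 : 0 < Real.exp (-t) := Real.exp_pos _
    constructor
    · positivity
    · nlinarith
  · rintro ⟨hx0, hxc⟩
    refine ⟨-Real.log (x / c), ?_, ?_⟩
    · have : Real.log (x / c) < 0 := Real.log_neg (by positivity) ((div_lt_one hc).mpr hxc)
      linarith
    · rw [neg_neg, Real.exp_log (by positivity : (0:ℝ) < x / c)]
      field_simp

end Aux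

/-- Modified Bessel function of the second kind, via its integral representation. -/
noncomputable def besselK (ν x : ℝ) : ℝ :=
  ∫ t in Set.Ioi (0:ℝ), Real.exp (-x * Real.cosh t) * Real.cosh (ν * t)

section Main

open MeasureTheory Set

private lemma besselK_rep (Q : ℕ) (hQ : 1 ≤ Q) {y : ℝ} (hy : 0 < y) :
    Real.sqrt y ^ Q * besselK Q (2 * Real.sqrt y)
      = (1/2) * ∫ u in Ioi (0:ℝ), Real.exp (-u - y/u) * u ^ (Q-1) := by
  set c := Real.sqrt y with hcdef
  have hc : 0 < c := Real.sqrt_pos.mpr hy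
  have hc2 : c ^ 2 = y := Real.sq_sqrt hy.le
  set g : ℝ → ℝ := fun u => Real.exp (-u - y/u) * (u/c) ^ Q / (2*u) with hg
  have geq : ∀ u ∈ Ioi (0:ℝ), g u = (2*c^Q)⁻¹ * (Real.exp (-u - y/u) * u ^ (Q-1)) := by
    intro u hu
    have hu0 : (0:ℝ) < u := hu
    have hQ1 : u ^ Q = u ^ (Q-1) * u := by
      rw [← pow_succ, Nat.sub_add_cancel hQ]
    rw [hg]
    simp only [div_pow, hQ1]
    field_simp
  have gi : IntegrableOn g (Ioi (0:ℝ)) := by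
    have h := (integrable_kn (Q-1) hy.le).const_mul ((2*c^Q)⁻¹)
    exact MeasureTheory.IntegrableOn.congr_fun h (fun u hu => (geq u hu).symm) measurableSet_Ioi
  have hderivA : ∀ t ∈ Ioi (0:ℝ), HasDerivWithinAt (fun t : ℝ => c * Real.exp t)
      (c * Real.exp t) (Ioi 0) t := fun t _ =>
    ((Real.hasDerivAt_exp t).const_mul c).hasDerivWithinAt
  have hinjA : InjOn (fun t : ℝ => c * Real.exp t) (Ioi 0) := by
    intro a _ b _ h
    have := mul_left_cancel₀ hc.ne' h
    exact Real.exp_injective this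
  have hAt : ∀ t ∈ Ioi (0:ℝ), |c * Real.exp t| • g (c * Real.exp t)
      = Real.exp (-(2*c) * Real.cosh t) * Real.exp (Q*t) / 2 := by
    intro t _
    have he : (0:ℝ) < Real.exp t := Real.exp_pos t
    have harg : -(c * Real.exp t) - y / (c * Real.exp t) = -(2*c) * Real.cosh t := by
      rw [← hc2, Real.cosh_eq, Real.exp_neg]
      field_simp
      ring
    have hpow : (c * Real.exp t / c) ^ Q = Real.exp (Q * t) := by
      rw [mul_div_cancel_left₀ _ hc.ne', ← Real.exp_nat_mul]
    rw [hg]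
    simp only [smul_eq_mul, harg, hpow, abs_of_pos (by positivity : (0:ℝ) < c * Real.exp t)]
    field_simp
  have hderivB : ∀ t ∈ Ioi (0:ℝ), HasDerivWithinAt (fun t : ℝ => c * Real.exp (-t))
      (-(c * Real.exp (-t))) (Ioi 0) t := by
    intro t _
    have h1 : HasDerivAt (fun t : ℝ => Real.exp (-t)) (-Real.exp (-t)) t := by
      simpa using ((hasDerivAt_id t).neg.exp)
    simpa [mul_comm] using (h1.const_mul c).hasDerivWithinAt
  have hinjB : InjOn (fun t : ℝ => c * Real.exp (-t)) (Ioi 0) := by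
    intro a _ b _ h
    have := Real.exp_injective (mul_left_cancel₀ hc.ne' h)
    linarith [neg_injective this]
  have hBt : ∀ t ∈ Ioi (0:ℝ), |(-(c * Real.exp (-t)))| • g (c * Real.exp (-t))
      = Real.exp (-(2*c) * Real.cosh t) * Real.exp (-(Q*t)) / 2 := by
    intro t _
    have he : (0:ℝ) < Real.exp (-t) := Real.exp_pos _
    have harg : -(c * Real.exp (-t)) - y / (c * Real.exp (-t)) = -(2*c) * Real.cosh t := by
      rw [← hc2, Real.cosh_eq, Real.exp_neg]
      field_simp
      ring
    have hpow : (c * Real.exp (-t) / c) ^ Q = Real.exp (-(Q * t)) := by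
      rw [mul_div_cancel_left₀ _ hc.ne', ← Real.exp_nat_mul]
      ring_nf
    rw [hg]
    simp only [smul_eq_mul, harg, hpow, abs_neg,
      abs_of_pos (by positivity : (0:ℝ) < c * Real.exp (-t))]
    field_simp
  have hEA : ∫ t in Ioi (0:ℝ), Real.exp (-(2*c) * Real.cosh t) * Real.exp (Q*t) / 2
      = ∫ u in Ioi c, g u := by
    rw [← img_exp hc, integral_image_eq_integral_abs_deriv_smul measurableSet_Ioi hderivA hinjA g]
    exact (setIntegral_congr_fun measurableSet_Ioi (fun t ht => (hAt t ht).symm))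
  have hEB : ∫ t in Ioi (0:ℝ), Real.exp (-(2*c) * Real.cosh t) * Real.exp (-(Q*t)) / 2
      = ∫ u in Ioo 0 c, g u := by
    rw [← img_exp_neg hc,
      integral_image_eq_integral_abs_deriv_smul measurableSet_Ioi hderivB hinjB g]
    exact (setIntegral_congr_fun measurableSet_Ioi (fun t ht => (hBt t ht).symm))
  have giA : IntegrableOn g (Ioi c) := gi.mono_set (Ioi_subset_Ioi hc.le)
  have giB : IntegrableOn g (Ioo 0 c) := gi.mono_set Ioo_subset_Ioi_self
  have iA : IntegrableOn (fun t : ℝ => Real.exp (-(2*c) * Real.cosh t) * Real.exp (Q*t) / 2)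
      (Ioi (0:ℝ)) := by
    have h := (integrableOn_image_iff_integrableOn_abs_deriv_smul measurableSet_Ioi
      hderivA hinjA g).mp (by rwa [img_exp hc])
    exact h.congr_fun hAt measurableSet_Ioi
  have iB : IntegrableOn (fun t : ℝ => Real.exp (-(2*c) * Real.cosh t) * Real.exp (-(Q*t)) / 2)
      (Ioi (0:ℝ)) := by
    have h := (integrableOn_image_iff_integrableOn_abs_deriv_smul measurableSet_Ioi
      hderivB hinjB g).mp (by rwa [img_exp_neg hc])
    exact h.congr_fun hBt measurableSet_Ioi
  have hbes : besselK Q (2*c)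
      = (∫ t in Ioi (0:ℝ), Real.exp (-(2*c) * Real.cosh t) * Real.exp (Q*t) / 2)
      + ∫ t in Ioi (0:ℝ), Real.exp (-(2*c) * Real.cosh t) * Real.exp (-(Q*t)) / 2 := by
    rw [besselK, ← integral_add iA iB]
    apply setIntegral_congr_fun measurableSet_Ioi
    intro t _
    simp only [Real.cosh_eq]
    ring
  have hsplit : (∫ u in Ioi c, g u) + (∫ u in Ioo 0 c, g u) = ∫ u in Ioi (0:ℝ), g u := by
    rw [← integral_Ioc_eq_integral_Ioo (f := g), ← Ioc_union_Ioi_eq_Ioi hc.le,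
      setIntegral_union (Ioc_disjoint_Ioi le_rfl) measurableSet_Ioi
        (gi.mono_set Ioc_subset_Ioi_self) giA]
    ring
  have hfin : besselK Q (2*c) = ∫ u in Ioi (0:ℝ), g u := by
    rw [hbes, hEA, hEB, hsplit]
  rw [hfin]
  rw [setIntegral_congr_fun measurableSet_Ioi geq, integral_const_mul]
  have hcQ : (0:ℝ) < c ^ Q := pow_pos hc Q
  field_simp

private lemma key_lim (Q : ℕ) (hQ : 2 ≤ Q) :
    Tendsto (fun y : ℝ =>
        (1 - (Real.Gamma Q)⁻¹ * ∫ u in Ioi (0:ℝ), Real.exp (-u - y/u) * u ^ (Q-1)) / y)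
      (nhdsWithin 0 (Ioi 0)) (nhds (((Q:ℝ)-1)⁻¹)) := by
  have hQ1 : 1 ≤ Q := le_trans (by norm_num) hQ
  have hΓpos : 0 < Real.Gamma Q := Real.Gamma_pos_of_pos (by positivity)
  have hpow : ∀ u : ℝ, 0 < u → u ^ (Q-1) = u ^ (Q-2) * u := by
    intro u hu
    rw [← pow_succ]
    congr 1
    omega
  have hΦ : Tendsto (fun y : ℝ => ∫ u in Ioi (0:ℝ),
        Real.exp (-u) * u ^ (Q-1) * ((1 - Real.exp (-y/u))/y))
      (nhdsWithin 0 (Ioi 0)) (nhds (∫ u in Ioi (0:ℝ), Real.exp (-u) * u ^ (Q-2))) := by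
    refine tendsto_integral_filter_of_dominated_convergence
      (fun u => Real.exp (-u) * u ^ (Q-2)) ?_ ?_ (integrable_gn (Q-2)) ?_
    · refine Eventually.of_forall (fun y => ?_)
      refine ContinuousOn.aestronglyMeasurable ?_ measurableSet_Ioi
      refine ContinuousOn.mul (ContinuousOn.mul continuousOn_id.neg.rexp
        (continuousOn_id.pow _)) ?_
      refine ContinuousOn.div_const ?_ y
      exact (continuousOn_const.sub ((continuousOn_const.div continuousOn_id
        (fun x hx => ne_of_gt hx)).rexp))
    · filter_upwards [self_mem_nhdsWithin] with y hy
      filter_upwards [ae_restrict_mem measurableSet_Ioi] with u hu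
      have hy0 : (0:ℝ) < y := hy
      have hu0 : (0:ℝ) < u := hu
      have hneg : -y/u = -(y/u) := by ring
      have hb1 : 0 ≤ 1 - Real.exp (-y/u) := by
        have : Real.exp (-y/u) ≤ 1 := Real.exp_le_one_iff.mpr (by
          have := div_nonneg hy0.le hu0.le; rw [hneg]; linarith)
        linarith
      have hb2 : 1 - Real.exp (-y/u) ≤ y/u := by
        have h := Real.add_one_le_exp (-y/u)
        linarith [hneg]
      rw [Real.norm_eq_abs, abs_of_nonneg (by positivity)]
      calc Real.exp (-u) * u ^ (Q-1) * ((1 - Real.exp (-y/u))/y)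
          ≤ Real.exp (-u) * u ^ (Q-1) * ((y/u)/y) := by gcongr
        _ = Real.exp (-u) * u ^ (Q-2) := by
            rw [hpow u hu0]
            field_simp
    · filter_upwards [ae_restrict_mem measurableSet_Ioi] with u hu
      have hu0 : (0:ℝ) < u := hu
      have h := (slope_lim hu0).const_mul (Real.exp (-u) * u ^ (Q-1))
      have heq : Real.exp (-u) * u ^ (Q-1) * u⁻¹ = Real.exp (-u) * u ^ (Q-2) := by
        rw [hpow u hu0]; field_simp
      rw [heq] at h
      exact h
  have hL : (∫ u in Ioi (0:ℝ), Real.exp (-u) * u ^ (Q-2)) = Real.Gamma ((Q:ℝ)-1) := by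
    have h1 : ((Q:ℝ)-1) = ((Q-1:ℕ):ℝ) := by push_cast [Nat.cast_sub hQ1]; ring
    rw [h1, Gamma_nat_integral (Q-1) (by omega)]
    congr 1
  have hval : (Real.Gamma Q)⁻¹ * Real.Gamma ((Q:ℝ)-1) = ((Q:ℝ)-1)⁻¹ := by
    have hQR : (1:ℝ) < (Q:ℝ) := by
      have : (2:ℝ) ≤ (Q:ℝ) := by exact_mod_cast hQ
      linarith
    have h2 : Real.Gamma ((Q:ℝ)-1+1) = ((Q:ℝ)-1) * Real.Gamma ((Q:ℝ)-1) :=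
      Real.Gamma_add_one (by linarith)
    rw [sub_add_cancel] at h2
    have hΓ1 : 0 < Real.Gamma ((Q:ℝ)-1) := Real.Gamma_pos_of_pos (by linarith)
    rw [h2, mul_comm ((Q:ℝ)-1) (Real.Gamma _), mul_inv]
    rw [mul_comm, ← mul_assoc, mul_inv_cancel₀ hΓ1.ne', one_mul]
  have hT := (hΦ.const_mul ((Real.Gamma Q)⁻¹))
  rw [hL] at hT
  rw [← hval]
  refine hT.congr' ?_
  filter_upwards [self_mem_nhdsWithin] with y hy
  have hy0 : (0:ℝ) < y := hy
  have hsub : (∫ u in Ioi (0:ℝ), Real.exp (-u) * u ^ (Q-1) * ((1 - Real.exp (-y/u))/y))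
      = ((∫ u in Ioi (0:ℝ), Real.exp (-u) * u ^ (Q-1))
        - ∫ u in Ioi (0:ℝ), Real.exp (-u - y/u) * u ^ (Q-1)) / y := by
    rw [← integral_sub (integrable_gn (Q-1)) (integrable_kn (Q-1) hy0.le)]
    rw [← integral_div]
    refine setIntegral_congr_fun measurableSet_Ioi (fun u hu => ?_)
    have h : Real.exp (-u - y/u) = Real.exp (-u) * Real.exp (-y/u) := by
      rw [← Real.exp_add]; ring_nf
    rw [h]
    ring
  rw [hsub, ← Gamma_nat_integral Q hQ1]
  field_simp

end Main

/-- for `F(z) = 1 − (2/Γ(Q)) (z/ζ)^{Q/2} K_Q(2√(z/ζ))` with `Q ≥ 2`,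
`lim_{ζ→∞} ζ·F(z) = z/(Q−1)` for each fixed `z > 0` (high-SNR single-channel scaling). -/
theorem high_snr_outage_scaling (Q : ℕ) (hQ : 2 ≤ Q) (z : ℝ) (hz : 0 < z) :
    Tendsto
      (fun ζ : ℝ =>
        ζ * (1 - 2 / Real.Gamma Q * (z / ζ) ^ ((Q : ℝ) / 2) *
          besselK Q (2 * Real.sqrt (z / ζ))))
      atTop (nhds (z / ((Q : ℝ) - 1))) := by
  have hQ1 : 1 ≤ Q := by omega
  have hdiv : Tendsto (fun ζ : ℝ => z/ζ) atTop (nhdsWithin 0 (Set.Ioi 0)) := by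
    rw [tendsto_nhdsWithin_iff]
    constructor
    · exact Tendsto.div_atTop tendsto_const_nhds tendsto_id
    · filter_upwards [eventually_gt_atTop (0:ℝ)] with ζ hζ
      exact div_pos hz hζ
  have hcomp := (key_lim Q hQ).comp hdiv
  have hmul := hcomp.const_mul z
  have hval : z * ((Q:ℝ)-1)⁻¹ = z / ((Q:ℝ)-1) := (div_eq_mul_inv _ _).symm
  rw [hval] at hmul
  refine hmul.congr' ?_
  filter_upwards [eventually_gt_atTop (0:ℝ)] with ζ hζ
  have hy : 0 < z/ζ := div_pos hz hζ
  have hrep := besselK_rep Q hQ1 hy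
  have hrpow : (z/ζ) ^ ((Q:ℝ)/2) = Real.sqrt (z/ζ) ^ Q := by
    rw [Real.sqrt_eq_rpow, ← Real.rpow_natCast ((z/ζ) ^ ((1:ℝ)/2)) Q,
      ← Real.rpow_mul hy.le]
    congr 1
    ring
  have h1 : 2 / Real.Gamma Q * (z/ζ) ^ ((Q:ℝ)/2) * besselK Q (2 * Real.sqrt (z/ζ))
      = (Real.Gamma Q)⁻¹
        * ∫ u in Set.Ioi (0:ℝ), Real.exp (-u - (z/ζ)/u) * u ^ (Q-1) := by
    rw [hrpow]
    calc 2 / Real.Gamma Q * Real.sqrt (z/ζ) ^ Q * besselK Q (2 * Real.sqrt (z/ζ))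
        = 2 / Real.Gamma Q
          * (Real.sqrt (z/ζ) ^ Q * besselK Q (2 * Real.sqrt (z/ζ))) := by ring
      _ = 2 / Real.Gamma Q
          * ((1/2) * ∫ u in Set.Ioi (0:ℝ), Real.exp (-u - (z/ζ)/u) * u ^ (Q-1)) := by
            rw [hrep]
      _ = (Real.Gamma Q)⁻¹
          * ∫ u in Set.Ioi (0:ℝ), Real.exp (-u - (z/ζ)/u) * u ^ (Q-1) := by
            ring
  show z * ((1 - (Real.Gamma Q)⁻¹
      * ∫ u in Set.Ioi (0:ℝ), Real.exp (-u - (z/ζ)/u) * u ^ (Q-1)) / (z/ζ))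
    = ζ * (1 - 2 / Real.Gamma Q * (z/ζ) ^ ((Q:ℝ)/2) * besselK Q (2 * Real.sqrt (z/ζ)))
  rw [h1]
  rw [div_div_eq_mul_div]
  field_simp
  congr 1; congr 1; funext u; congr 2; ring
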